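/- If P̄ ∈ A₁, then the filtration F^X̄ is immersed in F̄ under P̄: for every t ∈ I, the σ-algebra F̄_t is conditionally independent of F^X̄_T given F^X̄_t under P̄. -/

import Mathlib

open MeasureTheory ProbabilityTheory
open scoped NNReal ENNReal Topology
open Fin.NatCast

namespace LPOS

variable (T : ℕ) (E : Type*) [MeasurableSpace E]

/-- canonical path space E^I, I = {0,…,T} -/
abbrev Path := Fin (T + 1) → E

/-- canonical space Ω̄ = E^I × I -/
abbrev OmegaBar := Path T E × Fin (T + 1)

/-- the filtration F^X_t = σ(X_s : s ≤ t) on the path space -/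
def FX (t : ℕ) : MeasurableSpace (Path T E) :=
  ⨆ s : Fin (T + 1), ⨆ _ : (s : ℕ) ≤ t, MeasurableSpace.comap (fun x => x s) inferInstance

/-- the filtration F^X̄_t = σ(X̄_s : s ≤ t) on Ω̄ -/
def FXbar (t : ℕ) : MeasurableSpace (OmegaBar T E) :=
  ⨆ s : Fin (T + 1), ⨆ _ : (s : ℕ) ≤ t, MeasurableSpace.comap (fun ω => ω.1 s) inferInstance

/-- the filtration F^τ̄_t = σ({τ̄ = 0},…,{τ̄ = t}) on Ω̄ -/
def Ftau (t : ℕ) : MeasurableSpace (OmegaBar T E) :=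
  MeasurableSpace.generateFrom {A | ∃ s : Fin (T + 1), (s : ℕ) ≤ t ∧ A = {ω | ω.2 = s}}

/-- F̄_t = F^X̄_t ∨ F^τ̄_t -/
def Fbar (t : ℕ) : MeasurableSpace (OmegaBar T E) := FXbar T E t ⊔ Ftau T E t

/-- F^{X̄,P̄}_t = F^X̄_t ∨ N_{P̄}(F̄_T) -/
def FXbarP (P : Measure (OmegaBar T E)) (t : ℕ) : MeasurableSpace (OmegaBar T E) :=
  FXbar T E t ⊔ MeasurableSpace.generateFrom
    {A | ∃ C, MeasurableSet[Fbar T E T] C ∧ P C = 0 ∧ A ⊆ C}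

/-- F^{X,ν}_t = F^X_t ∨ N_ν(F^X_T) on the path space -/
def FXnu (ν : Measure (Path T E)) (t : ℕ) : MeasurableSpace (Path T E) :=
  FX T E t ⊔ MeasurableSpace.generateFrom
    {A | ∃ C, MeasurableSet[FX T E T] C ∧ ν C = 0 ∧ A ⊆ C}

/-- "under P, X̄ is a G-Markov chain with transition kernels (π_t)" -/
def IsMarkovWith (P : Measure (OmegaBar T E)) (G : ℕ → MeasurableSpace (OmegaBar T E))
    (π : ℕ → Kernel E E) : Prop :=
  ∀ t : ℕ, 1 ≤ t → t ≤ T → ∀ B : Set E, MeasurableSet B →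
    (P[Set.indicator {ω | ω.1 (t : Fin (T + 1)) ∈ B} (fun _ => (1 : ℝ)) | G (t - 1)]
      =ᵐ[P] fun ω => (π t (ω.1 ((t - 1 : ℕ) : Fin (T + 1))) B).toReal)

/-- ν is the law of the Markov chain with kernels (π_t) and initial law m₀* -/
def IsMarkovLaw (ν : Measure (Path T E)) (π : ℕ → Kernel E E) (m0 : Measure E) : Prop :=
  ν.map (fun x => x 0) = m0 ∧
  ∀ t : ℕ, 1 ≤ t → t ≤ T → ∀ B : Set E, MeasurableSet B →
    (ν[Set.indicator {x | x (t : Fin (T + 1)) ∈ B} (fun _ => (1 : ℝ)) | FX T E (t - 1)]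
      =ᵐ[ν] fun x => (π t (x ((t - 1 : ℕ) : Fin (T + 1))) B).toReal)

/-- A₀ : under P, X̄ is a (plain) Markov chain with initial law m₀* and kernels (π_t),
and τ̄ is an F^{X̄,P̄}-stopping time -/
def A0 (π : ℕ → Kernel E E) (m0 : Measure E) : Set (Measure (OmegaBar T E)) :=
  {P | IsProbabilityMeasure P ∧ P.map (fun ω => ω.1 0) = m0 ∧
    IsMarkovWith T E P (FXbar T E) π ∧
    ∀ t : ℕ, t ≤ T → MeasurableSet[FXbarP T E P t] {ω | (ω.2 : ℕ) ≤ t}}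

/-- A₁ : under P, X̄ is an F̄-Markov chain with initial law m₀* and kernels (π_t) -/
def A1 (π : ℕ → Kernel E E) (m0 : Measure E) : Set (Measure (OmegaBar T E)) :=
  {P | IsProbabilityMeasure P ∧ P.map (fun ω => ω.1 0) = m0 ∧
    IsMarkovWith T E P (Fbar T E) π}

/-- occupation measure μ^P̄_t(B) = P̄(X̄_t ∈ B, τ̄ = t) -/
noncomputable def occMu (P : Measure (OmegaBar T E)) (t : Fin (T + 1)) : Measure E :=
  (P.restrict {ω | ω.2 = t}).map (fun ω => ω.1 t)

/-- occupation measure m^P̄_t(B) = P̄(X̄_t ∈ B, t < τ̄), t ∈ I∖{T} -/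
noncomputable def occM (P : Measure (OmegaBar T E)) (t : Fin T) : Measure E :=
  (P.restrict {ω | (t : ℕ) < (ω.2 : ℕ)}).map (fun ω => ω.1 t.castSucc)

/-- the pair of families of occupation measures induced by a probability measure on Ω̄ -/
instance occMu_finite (P : Measure (OmegaBar T E)) [IsFiniteMeasure P] (t : Fin (T + 1)) :
    IsFiniteMeasure (occMu T E P t) := by
  unfold occMu; infer_instance

instance occM_finite (P : Measure (OmegaBar T E)) [IsFiniteMeasure P] (t : Fin T) :
    IsFiniteMeasure (occM T E P t) := by
  unfold occM; infer_instance

/-- the pair of families of occupation measures induced by a probability measure on Ω̄ -/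
noncomputable def occ (P : ProbabilityMeasure (OmegaBar T E)) :
    (Fin (T + 1) → FiniteMeasure E) × (Fin T → FiniteMeasure E) :=
  (fun t => ⟨occMu T E (P : Measure (OmegaBar T E)) t, inferInstance⟩,
   fun t => ⟨occM T E (P : Measure (OmegaBar T E)) t, inferInstance⟩)

/-- the linear-programming constraint set R -/
def Rset [TopologicalSpace E] (π : ℕ → Kernel E E) (m0 : Measure E) :
    Set ((Fin (T + 1) → FiniteMeasure E) × (Fin T → FiniteMeasure E)) :=
  {q | (∀ t, q.1 t Set.univ ≤ 1) ∧ (∀ t, q.2 t Set.univ ≤ 1) ∧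
    ∀ φ : ℕ → E → ℝ, (∀ t, Continuous (φ t)) →
      ∑ t : Fin (T + 1), ∫ x, φ t x ∂(q.1 t : Measure E)
        = (∫ x, φ 0 x ∂m0) +
          ∑ t : Fin T, ∫ x, ((∫ y, φ ((t : ℕ) + 1) y ∂(π ((t : ℕ) + 1) x)) - φ t x)
            ∂(q.2 t : Measure E)}

noncomputable def Mphi (π : ℕ → Kernel E E) (φ : ℕ → E → ℝ) (t : ℕ)
    (ω : OmegaBar T E) : ℝ :=
  φ t (ω.1 (t : Fin (T + 1))) -
    ∑ s ∈ Finset.range t,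
      ((∫ y, φ (s + 1) y ∂(π (s + 1) (ω.1 (s : Fin (T + 1))))) - φ s (ω.1 (s : Fin (T + 1))))

def sigmaTimes (t : ℕ) : MeasurableSpace (Fin (T + 1)) :=
  MeasurableSpace.generateFrom {S | ∃ s : Fin (T + 1), (s : ℕ) ≤ t ∧ S = {s}}

noncomputable def Hfun (π : ℕ → Kernel E E) (Bs : Fin (T+1) → Set E) : ℕ → E → ℝ≥0∞
  | 0 => fun _ => 1
  | (k+1) => fun x => ∫⁻ y, Set.indicator (Bs ((T - k : ℕ) : Fin (T+1))) 1 y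
      * Hfun π Bs k y ∂(π (T - k) x)

def Fset (Bs : Fin (T+1) → Set E) (u : ℕ) : Set (OmegaBar T E) :=
  {ω | ∀ v : ℕ, u < v → v ≤ T → ω.1 (v : Fin (T+1)) ∈ Bs (v : Fin (T+1))}

section Aux
variable {T E}

lemma Hfun_measurable (π : ℕ → Kernel E E) [∀ t, IsMarkovKernel (π t)]
    (Bs : Fin (T+1) → Set E) (hBs : ∀ s, MeasurableSet (Bs s)) :
    ∀ k, Measurable (Hfun T E π Bs k)
  | 0 => measurable_const
  | (k+1) => Measurable.lintegral_kernel
      ((measurable_one.indicator (hBs _)).mul (Hfun_measurable π Bs hBs k))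

lemma Hfun_le_one (π : ℕ → Kernel E E) [∀ t, IsMarkovKernel (π t)]
    (Bs : Fin (T+1) → Set E) : ∀ k x, Hfun T E π Bs k x ≤ 1
  | 0, x => le_rfl
  | (k+1), x => by
    have h1 : ∀ y : E, Set.indicator (Bs ((T - k : ℕ) : Fin (T+1))) 1 y
        * Hfun T E π Bs k y ≤ 1 := by
      intro y
      have h2 : Set.indicator (Bs ((T - k : ℕ) : Fin (T+1))) (1 : E → ℝ≥0∞) y ≤ 1 := by
        by_cases h : y ∈ Bs ((T - k : ℕ) : Fin (T+1)) <;> simp [h]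
      exact le_trans (mul_le_mul' h2 (Hfun_le_one π Bs k y)) (by simp)
    refine le_trans (lintegral_mono h1) ?_
    simp [lintegral_one]

lemma measurable_X (s : Fin (T+1)) : Measurable (fun ω : OmegaBar T E => ω.1 s) :=
  (measurable_pi_apply s).comp measurable_fst

lemma Fbar_le (t : ℕ) : Fbar T E t ≤ (inferInstance : MeasurableSpace (OmegaBar T E)) := by
  refine sup_le (iSup_le fun s => iSup_le fun _ => measurable_iff_comap_le.mp (measurable_X s)) ?_
  refine MeasurableSpace.generateFrom_le ?_
  rintro A ⟨s, -, rfl⟩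
  exact measurable_snd (measurableSet_singleton s)

/-- set version of the one-step Markov property -/
lemma markov_set (P : Measure (OmegaBar T E)) [IsProbabilityMeasure P]
    (π : ℕ → Kernel E E) [∀ t, IsMarkovKernel (π t)]
    (hM : IsMarkovWith T E P (Fbar T E) π)
    {t : ℕ} (ht1 : 1 ≤ t) (htT : t ≤ T)
    {s : Set E} (hs : MeasurableSet s)
    {A : Set (OmegaBar T E)} (hA : MeasurableSet[Fbar T E (t-1)] A) :
    P ({ω : OmegaBar T E | ω.1 (t : Fin (T+1)) ∈ s} ∩ A)
      = ∫⁻ ω in A, π t (ω.1 ((t-1 : ℕ) : Fin (T+1))) s ∂P := by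
  have hA' : MeasurableSet A := Fbar_le _ _ hA
  have hSm : MeasurableSet {ω : OmegaBar T E | ω.1 (t : Fin (T+1)) ∈ s} :=
    (measurable_X _) hs
  have hint : Integrable (Set.indicator {ω : OmegaBar T E | ω.1 (t : Fin (T+1)) ∈ s}
      (fun _ => (1:ℝ))) P := (integrable_const (1:ℝ)).indicator hSm
  have h1 : ∫ ω in A, Set.indicator {ω : OmegaBar T E | ω.1 (t : Fin (T+1)) ∈ s}
      (fun _ => (1:ℝ)) ω ∂P
      = ∫ ω in A, (π t (ω.1 ((t-1 : ℕ) : Fin (T+1))) s).toReal ∂P := by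
    rw [← setIntegral_condExp (Fbar_le (t-1)) hint hA]
    exact integral_congr_ae (ae_restrict_of_ae (hM t ht1 htT s hs))
  have hg : Measurable (fun ω : OmegaBar T E => π t (ω.1 ((t-1 : ℕ) : Fin (T+1))) s) :=
    (Kernel.measurable_coe (π t) hs).comp (measurable_X _)
  have hgle : ∀ ω : OmegaBar T E, π t (ω.1 ((t-1 : ℕ) : Fin (T+1))) s ≤ 1 := fun ω =>
    prob_le_one
  rw [integral_indicator_const (1:ℝ) hSm, measureReal_restrict_apply hSm, measureReal_def, smul_eq_mul, mul_one,
    integral_toReal (hg.aemeasurable.restrict)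
      (ae_of_all _ fun ω => lt_of_le_of_lt (hgle ω) ENNReal.one_lt_top)] at h1
  have hfin1 : P ({ω : OmegaBar T E | ω.1 (t : Fin (T+1)) ∈ s} ∩ A) ≠ ∞ :=
    (measure_lt_top _ _).ne
  have hfin2 : ∫⁻ ω in A, π t (ω.1 ((t-1 : ℕ) : Fin (T+1))) s ∂P ≠ ∞ := by
    refine ne_of_lt (lt_of_le_of_lt (lintegral_mono (fun ω => hgle ω)) ?_)
    rw [setLIntegral_one]
    exact measure_lt_top _ _
  exact (ENNReal.toReal_eq_toReal_iff' hfin1 hfin2).mp h1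

/-- functional version of the one-step Markov property -/
lemma markov_lintegral (P : Measure (OmegaBar T E)) [IsProbabilityMeasure P]
    (π : ℕ → Kernel E E) [∀ t, IsMarkovKernel (π t)]
    (hM : IsMarkovWith T E P (Fbar T E) π)
    {t : ℕ} (ht1 : 1 ≤ t) (htT : t ≤ T)
    {f : E → ℝ≥0∞} (hf : Measurable f)
    {A : Set (OmegaBar T E)} (hA : MeasurableSet[Fbar T E (t-1)] A) :
    ∫⁻ ω in A, f (ω.1 (t : Fin (T+1))) ∂P
      = ∫⁻ ω in A, ∫⁻ y, f y ∂(π t (ω.1 ((t-1 : ℕ) : Fin (T+1)))) ∂P := by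
  refine Measurable.ennreal_induction (motive := fun f =>
    ∫⁻ ω in A, f (ω.1 (t : Fin (T+1))) ∂P
      = ∫⁻ ω in A, ∫⁻ y, f y ∂(π t (ω.1 ((t-1 : ℕ) : Fin (T+1)))) ∂P) ?_ ?_ ?_ hf
  · intro c s hs
    have h1 : (fun ω : OmegaBar T E => Set.indicator s (fun _ => c) (ω.1 (t : Fin (T+1))))
        = Set.indicator {ω : OmegaBar T E | ω.1 (t : Fin (T+1)) ∈ s} (fun _ => c) := by
      funext ω
      by_cases h : ω.1 (t : Fin (T+1)) ∈ s <;>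
        simp [Set.indicator_of_mem, Set.indicator_of_notMem, h]
    have hSm : MeasurableSet {ω : OmegaBar T E | ω.1 (t : Fin (T+1)) ∈ s} :=
      (measurable_X _) hs
    rw [h1, lintegral_indicator_const (μ := P.restrict A) hSm,
      Measure.restrict_apply hSm,
      markov_set P π hM ht1 htT hs hA]
    simp_rw [lintegral_indicator_const hs]
    have hg : Measurable (fun ω : OmegaBar T E => π t (ω.1 ((t-1 : ℕ) : Fin (T+1))) s) :=
      (Kernel.measurable_coe (π t) hs).comp (measurable_X _)
    exact (lintegral_const_mul (μ := P.restrict A) c hg).symm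
  · intro f g _ hfm hgm hPf hPg
    have hfm1 : Measurable fun ω : OmegaBar T E => f (ω.1 (t : Fin (T+1))) :=
      hfm.comp (measurable_X _)
    have h2 : Measurable fun ω : OmegaBar T E =>
        ∫⁻ y, f y ∂(π t (ω.1 ((t-1 : ℕ) : Fin (T+1)))) :=
      (Measurable.lintegral_kernel hfm).comp (measurable_X _)
    simp only [Pi.add_apply]
    rw [lintegral_add_left hfm1, hPf, hPg]
    have h3 : ∀ ω : OmegaBar T E, ∫⁻ y, f y + g y ∂(π t (ω.1 ((t-1 : ℕ) : Fin (T+1))))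
        = (∫⁻ y, f y ∂(π t (ω.1 ((t-1 : ℕ) : Fin (T+1)))))
          + ∫⁻ y, g y ∂(π t (ω.1 ((t-1 : ℕ) : Fin (T+1)))) := fun ω =>
      lintegral_add_left hfm _
    simp_rw [h3]
    rw [lintegral_add_left h2]
  · intro f hfm hmono hPf
    have h1 : ∀ n, Measurable fun ω : OmegaBar T E => f n (ω.1 (t : Fin (T+1))) := fun n =>
      (hfm n).comp (measurable_X _)
    have h2 : ∀ n, Measurable fun ω : OmegaBar T E =>
        ∫⁻ y, f n y ∂(π t (ω.1 ((t-1 : ℕ) : Fin (T+1)))) := fun n =>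
      (Measurable.lintegral_kernel (hfm n)).comp (measurable_X _)
    simp only [iSup_apply]
    rw [lintegral_iSup h1 (fun i j hij ω => hmono hij _)]
    have h3 : ∀ ω : OmegaBar T E, ∫⁻ y, ⨆ n, f n y ∂(π t (ω.1 ((t-1 : ℕ) : Fin (T+1))))
        = ⨆ n, ∫⁻ y, f n y ∂(π t (ω.1 ((t-1 : ℕ) : Fin (T+1)))) := fun ω =>
      lintegral_iSup hfm (fun i j hij y => hmono hij y)
    simp_rw [h3]
    rw [lintegral_iSup h2 (fun i j hij ω => lintegral_mono (fun y => hmono hij y))]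
    exact iSup_congr hPf

lemma measurable_X_FXbar' {s : Fin (T+1)} {t : ℕ} (h : (s : ℕ) ≤ t) :
    Measurable[FXbar T E t] (fun ω : OmegaBar T E => ω.1 s) := by
  refine measurable_iff_comap_le.mpr ?_
  exact le_iSup₂ (f := fun (u : Fin (T+1)) (_ : (u:ℕ) ≤ t) =>
    MeasurableSpace.comap (fun ω : OmegaBar T E => ω.1 u) inferInstance) s h

lemma Fbar_mono' {s t : ℕ} (h : s ≤ t) : Fbar T E s ≤ Fbar T E t := by
  refine sup_le_sup ?_ ?_
  · refine iSup_le fun u => iSup_le fun hu => ?_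
    exact le_iSup₂ (f := fun (u : Fin (T+1)) (_ : (u:ℕ) ≤ t) =>
      MeasurableSpace.comap (fun ω : OmegaBar T E => ω.1 u) inferInstance) u (hu.trans h)
  · refine MeasurableSpace.generateFrom_le ?_
    rintro A ⟨u, hu, rfl⟩
    exact MeasurableSpace.measurableSet_generateFrom ⟨u, hu.trans h, rfl⟩

lemma future_claim (P : Measure (OmegaBar T E)) [IsProbabilityMeasure P]
    (π : ℕ → Kernel E E) [∀ t, IsMarkovKernel (π t)]
    (hM : IsMarkovWith T E P (Fbar T E) π)
    (Bs : Fin (T+1) → Set E) (hBs : ∀ s, MeasurableSet (Bs s)) :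
    ∀ (k u : ℕ), u + k = T → ∀ A : Set (OmegaBar T E), MeasurableSet[Fbar T E u] A →
      P (A ∩ Fset T E Bs u) = ∫⁻ ω in A, Hfun T E π Bs k (ω.1 (u : Fin (T+1))) ∂P := by
  intro k
  induction k with
  | zero =>
    intro u hu A hA
    have h1 : Fset T E Bs u = Set.univ := by
      ext ω
      simp only [Fset, Set.mem_setOf_eq, Set.mem_univ, iff_true]
      intro v hv hvT; omega
    rw [h1, Set.inter_univ]
    exact (setLIntegral_one A).symm
  | succ k ih =>
    intro u hu A hA
    set S : Set (OmegaBar T E) :=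
      {ω | ω.1 ((u+1 : ℕ) : Fin (T+1)) ∈ Bs ((u+1 : ℕ) : Fin (T+1))} with hS
    have hSmem : MeasurableSet[FXbar T E (u+1)] S :=
      measurable_X_FXbar' (by rw [Fin.val_cast_of_lt (by omega)]) (hBs _)
    have hSamb : MeasurableSet S := measurable_X _ (hBs _)
    have hAamb : MeasurableSet A := Fbar_le _ _ hA
    have hFeq : Fset T E Bs u = S ∩ Fset T E Bs (u+1) := by
      ext ω
      constructor
      · intro h
        refine ⟨h (u+1) (by omega) (by omega), fun v hv hvT => h v (by omega) hvT⟩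
      · rintro ⟨h1, h2⟩ v hv hvT
        rcases eq_or_lt_of_le (Nat.succ_le_of_lt hv) with h3 | h3
        · exact h3 ▸ h1
        · exact h2 v h3 hvT
    have hle : FXbar T E (u+1) ≤ Fbar T E (u+1) := le_sup_left
    have hA1 : MeasurableSet[Fbar T E (u+1)] (A ∩ S) :=
      MeasurableSet.inter (Fbar_mono' (by omega) _ hA) (hle _ hSmem)
    have step1 : P (A ∩ Fset T E Bs u) = P ((A ∩ S) ∩ Fset T E Bs (u+1)) := by
      rw [hFeq, Set.inter_assoc]
    rw [step1, ih (u+1) (by omega) _ hA1]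
    have step2 : ∫⁻ ω in A ∩ S, Hfun T E π Bs k (ω.1 ((u+1 : ℕ) : Fin (T+1))) ∂P
        = ∫⁻ ω in A, (fun y => Set.indicator (Bs ((u+1 : ℕ) : Fin (T+1))) 1 y
            * Hfun T E π Bs k y) (ω.1 ((u+1 : ℕ) : Fin (T+1))) ∂P := by
      rw [Set.inter_comm A S, ← Measure.restrict_restrict hSamb,
        ← lintegral_indicator hSamb]
      refine lintegral_congr fun ω => ?_
      by_cases h : ω ∈ S
      · have h2 : ω.1 ((u+1 : ℕ) : Fin (T+1)) ∈ Bs ((u+1 : ℕ) : Fin (T+1)) := h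
        simp only [Set.indicator_of_mem h, Set.indicator_of_mem h2, Pi.one_apply, one_mul]
      · have h2 : ω.1 ((u+1 : ℕ) : Fin (T+1)) ∉ Bs ((u+1 : ℕ) : Fin (T+1)) := h
        simp only [Set.indicator_of_notMem h, Set.indicator_of_notMem h2, zero_mul]
    rw [step2]
    have hf : Measurable (fun y => Set.indicator (Bs ((u+1 : ℕ) : Fin (T+1))) 1 y
        * Hfun T E π Bs k y) :=
      (measurable_one.indicator (hBs _)).mul (Hfun_measurable π Bs hBs k)
    have hA0 : MeasurableSet[Fbar T E (u+1-1)] A := by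
      simpa using hA
    rw [markov_lintegral P π hM (by omega) (by omega) hf hA0]
    have hTk : T - k = u + 1 := by omega
    refine lintegral_congr fun ω => ?_
    show _ = Hfun T E π Bs (k+1) (ω.1 (u : Fin (T+1)))
    simp only [Hfun, hTk]
    norm_num


lemma FXbar_le (t : ℕ) : FXbar T E t ≤ (inferInstance : MeasurableSpace (OmegaBar T E)) :=
  iSup_le fun s => iSup_le fun _ => measurable_iff_comap_le.mp (measurable_X s)

lemma FXbar_T_eq :
    FXbar T E T = MeasurableSpace.comap (Prod.fst : OmegaBar T E → Path T E)
      MeasurableSpace.pi := by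
  rw [show (MeasurableSpace.pi : MeasurableSpace (Path T E))
      = ⨆ s : Fin (T+1), MeasurableSpace.comap (fun x => x s) inferInstance from rfl,
    MeasurableSpace.comap_iSup]
  unfold FXbar
  refine le_antisymm (iSup_le fun s => iSup_le fun _ => ?_) (iSup_le fun s => ?_)
  · exact le_iSup_of_le s (le_of_eq ((MeasurableSpace.comap_comp
      (g := (Prod.fst : OmegaBar T E → Path T E)) (f := fun x : Path T E => x s)).symm))
  · refine le_iSup_of_le s ?_
    rw [iSup_pos (Nat.lt_succ_iff.mp s.isLt)]
    exact le_of_eq (MeasurableSpace.comap_comp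
      (g := (Prod.fst : OmegaBar T E → Path T E)) (f := fun x : Path T E => x s))

lemma lint_ae_le_one (P : Measure (OmegaBar T E)) [IsProbabilityMeasure P] {t : ℕ}
    {g : OmegaBar T E → ℝ≥0∞} (hg : Measurable[FXbar T E t] g)
    (hbd : ∀ A : Set (OmegaBar T E), MeasurableSet[FXbar T E t] A →
      ∫⁻ ω in A, g ω ∂P ≤ P A) :
    ∀ᵐ ω ∂P, g ω ≤ 1 := by
  have hgamb : Measurable g := hg.mono (FXbar_le t) le_rfl
  set N := {ω : OmegaBar T E | 1 < g ω} with hN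
  have hNm : MeasurableSet[FXbar T E t] N := hg measurableSet_Ioi
  have hNamb : MeasurableSet N := hgamb measurableSet_Ioi
  have h1 : ∫⁻ ω in N, g ω ∂P ≤ P N := hbd N hNm
  have h2 : P N ≤ ∫⁻ ω in N, g ω ∂P := by
    rw [← setLIntegral_one]
    exact setLIntegral_mono hgamb fun ω hω => le_of_lt hω
  have heq : ∫⁻ ω in N, g ω ∂P = P N := le_antisymm h1 h2
  have h3 : ∫⁻ ω in N, (g ω - 1) ∂P = 0 := by
    rw [lintegral_sub measurable_const
      (by rw [setLIntegral_one]; exact (measure_lt_top _ _).ne)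
      ((ae_restrict_iff' hNamb).mpr (ae_of_all _ fun ω hω => le_of_lt hω)),
      heq, setLIntegral_one, tsub_self]
  have h4 : ∀ᵐ ω ∂(P.restrict N), g ω - 1 = 0 :=
    (lintegral_eq_zero_iff (hgamb.sub measurable_const)).mp h3
  have h5 : ∀ᵐ ω ∂P, ω ∈ N → g ω ≤ 1 :=
    (ae_restrict_iff' hNamb).mp (h4.mono fun ω hω => tsub_eq_zero_iff_le.mp hω)
  refine h5.mono fun ω hω => ?_
  by_cases h : ω ∈ N
  · exact hω h
  · exact not_lt.mp h

lemma good_all (P : Measure (OmegaBar T E)) [IsProbabilityMeasure P]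
    (π : ℕ → Kernel E E) [∀ t, IsMarkovKernel (π t)]
    (hM : IsMarkovWith T E P (Fbar T E) π) (t : ℕ) (htT : t ≤ T) :
    ∀ B : Set (OmegaBar T E), MeasurableSet[FXbar T E T] B →
      ∃ g : OmegaBar T E → ℝ≥0∞, Measurable[FXbar T E t] g ∧ (∀ ω, g ω ≤ 1) ∧
        ∀ A, MeasurableSet[Fbar T E t] A → P (A ∩ B) = ∫⁻ ω in A, g ω ∂P := by
  have hle : FXbar T E t ≤ Fbar T E t := le_sup_left
  have hboxes := generateFrom_pi
    (α := fun _ : Fin (T+1) => E)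
  have h_eq : FXbar T E T = MeasurableSpace.generateFrom
      (Set.preimage (Prod.fst : OmegaBar T E → Path T E) ''
        (Set.pi Set.univ '' Set.pi Set.univ
          fun _ : Fin (T+1) => {s : Set E | MeasurableSet s})) := by
    rw [FXbar_T_eq, ← hboxes, MeasurableSpace.comap_generateFrom]
  have h_pi : IsPiSystem
      (Set.preimage (Prod.fst : OmegaBar T E → Path T E) ''
        (Set.pi Set.univ '' Set.pi Set.univ
          fun _ : Fin (T+1) => {s : Set E | MeasurableSet s})) := by
    rintro _ ⟨b1, hb1, rfl⟩ _ ⟨b2, hb2, rfl⟩ hne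
    rw [← Set.preimage_inter]
    refine ⟨b1 ∩ b2, ?_, rfl⟩
    refine isPiSystem_pi _ hb1 _ hb2 ?_
    obtain ⟨ω, hω⟩ := hne
    exact ⟨ω.1, hω⟩
  intro B hB
  refine MeasurableSpace.induction_on_inter (m := FXbar T E T)
    (C := fun B _ => ∃ g : OmegaBar T E → ℝ≥0∞, Measurable[FXbar T E t] g ∧
      (∀ ω, g ω ≤ 1) ∧
      ∀ A, MeasurableSet[Fbar T E t] A → P (A ∩ B) = ∫⁻ ω in A, g ω ∂P)
    h_eq h_pi ?_ ?_ ?_ ?_ B hB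
  · -- empty
    exact ⟨fun _ => 0, measurable_const, fun _ => zero_le_one, fun A hA => by simp⟩
  · -- cylinders
    rintro _ ⟨_, ⟨Bs, hBs, rfl⟩, rfl⟩
    simp only [Set.mem_pi, Set.mem_univ, forall_true_left, Set.mem_setOf_eq] at hBs
    have hBs' : ∀ s, MeasurableSet (Bs s) := hBs
    set Past : Set (OmegaBar T E) :=
      ⋂ (s : Fin (T+1)) (_ : (s : ℕ) ≤ t), (fun ω : OmegaBar T E => ω.1 s) ⁻¹' (Bs s)
      with hPastDef
    have hPast_meas : MeasurableSet[FXbar T E t] Past :=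
      MeasurableSet.iInter fun s => MeasurableSet.iInter fun hs =>
        measurable_X_FXbar' hs (hBs' s)
    have hPastAmb : MeasurableSet Past := hle.trans (Fbar_le t) _ hPast_meas
    have htcast : ((t : Fin (T+1)) : ℕ) = t := Fin.val_cast_of_lt (by omega)
    have hsplit : (Prod.fst : OmegaBar T E → Path T E) ⁻¹' Set.pi Set.univ Bs
        = Past ∩ Fset T E Bs t := by
      ext ω
      simp only [Set.mem_preimage, Set.mem_pi, Set.mem_univ, forall_true_left,
        Set.mem_inter_iff, Set.mem_iInter, Fset, Set.mem_setOf_eq, hPastDef]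
      constructor
      · intro h
        exact ⟨fun s _ => h s, fun v _ _ => h _⟩
      · rintro ⟨h1, h2⟩ s
        by_cases hs : (s : ℕ) ≤ t
        · exact h1 s hs
        · have := h2 (s : ℕ) (by omega) (by omega)
          rwa [Fin.cast_val_eq_self] at this
    refine ⟨fun ω => Set.indicator Past (fun _ => (1:ℝ≥0∞)) ω
        * Hfun T E π Bs (T - t) (ω.1 (t : Fin (T+1))), ?_, ?_, ?_⟩
    · exact (measurable_const.indicator hPast_meas).mul
        ((Hfun_measurable π Bs hBs' (T - t)).comp (measurable_X_FXbar' (le_of_eq htcast)))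
    · intro ω
      have h1 : Set.indicator Past (fun _ => (1:ℝ≥0∞)) ω ≤ 1 := by
        by_cases h : ω ∈ Past <;> simp [h]
      exact le_trans (mul_le_mul' h1 (Hfun_le_one π Bs (T - t) _)) (by simp)
    · intro A hA
      have hAamb : MeasurableSet A := Fbar_le _ _ hA
      have hA1 : MeasurableSet[Fbar T E t] (A ∩ Past) :=
        MeasurableSet.inter hA (hle _ hPast_meas)
      rw [hsplit, ← Set.inter_assoc,
        future_claim P π hM Bs hBs' (T - t) t (by omega) _ hA1,
        Set.inter_comm A Past, ← Measure.restrict_restrict hPastAmb,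
        ← lintegral_indicator hPastAmb]
      refine lintegral_congr fun ω => ?_
      by_cases h : ω ∈ Past
      · simp only [Set.indicator_of_mem h, one_mul]
      · simp only [Set.indicator_of_notMem h, zero_mul]
  · -- complement
    rintro B hBmeas ⟨g, hgm, hgle, hgid⟩
    have hBamb : MeasurableSet B := FXbar_le T _ hBmeas
    refine ⟨fun ω => 1 - g ω, measurable_const.sub hgm, fun ω => tsub_le_self.trans le_rfl, ?_⟩
    intro A hA
    have hAamb : MeasurableSet A := Fbar_le _ _ hA
    have h1 : A ∩ Bᶜ = A \ (A ∩ B) := by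
      ext ω; simp only [Set.mem_inter_iff, Set.mem_compl_iff, Set.mem_diff]; tauto
    have h2 : P (A ∩ Bᶜ) = P A - P (A ∩ B) := by
      rw [h1, measure_diff Set.inter_subset_left
        ((hAamb.inter hBamb).nullMeasurableSet) (measure_ne_top _ _)]
    have h3 : ∫⁻ ω in A, (1 - g ω) ∂P = P A - ∫⁻ ω in A, g ω ∂P := by
      rw [lintegral_sub (hgm.mono (hle.trans (Fbar_le t)) le_rfl)
        (by rw [← hgid A hA]; exact (measure_lt_top _ _).ne)
        (ae_of_all _ hgle), setLIntegral_one]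
    rw [h2, h3, hgid A hA]
  · -- disjoint union
    rintro f hdisj hfm hf
    choose g hgm hgle hgid using hf
    have hfamb : ∀ n, MeasurableSet (f n) := fun n => FXbar_le T _ (hfm n)
    set G0 : OmegaBar T E → ℝ≥0∞ := fun ω => ∑' n, g n ω with hG0def
    have hG0m : Measurable[FXbar T E t] G0 := Measurable.ennreal_tsum hgm
    have hid0 : ∀ A, MeasurableSet[Fbar T E t] A →
        P (A ∩ ⋃ n, f n) = ∫⁻ ω in A, G0 ω ∂P := by
      intro A hA
      have hAamb : MeasurableSet A := Fbar_le _ _ hA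
      rw [Set.inter_iUnion, measure_iUnion
        (hdisj.mono fun i j h => h.mono Set.inter_subset_right Set.inter_subset_right)
        (fun n => hAamb.inter (hfamb n))]
      rw [hG0def]
      rw [lintegral_tsum fun n =>
        ((hgm n).mono (hle.trans (Fbar_le t)) le_rfl).aemeasurable]
      exact tsum_congr fun n => hgid n A hA
    have hae : ∀ᵐ ω ∂P, G0 ω ≤ 1 := by
      refine lint_ae_le_one P hG0m fun A hA => ?_
      rw [← hid0 A (hle _ hA)]
      exact measure_mono Set.inter_subset_left
    refine ⟨fun ω => min (G0 ω) 1, hG0m.min measurable_const, fun ω => min_le_right _ _, ?_⟩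
    intro A hA
    rw [hid0 A hA]
    refine lintegral_congr_ae (ae_restrict_of_ae (hae.mono fun ω h => ?_))
    exact (min_eq_left h).symm

end Aux

section Thms

variable [MetricSpace E] [CompactSpace E] [Nonempty E] [BorelSpace E]
    [SecondCountableTopology E]

theorem stmt_10
    (hT : 1 ≤ T)
    (π : ℕ → Kernel E E) [∀ t, IsMarkovKernel (π t)]
    (m0 : Measure E) [IsProbabilityMeasure m0]
    (P : Measure (OmegaBar T E)) (hP : P ∈ A1 T E π m0) :
    ∀ t : ℕ, t ≤ T →
      ∀ A : Set (OmegaBar T E), MeasurableSet[Fbar T E t] A →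
      ∀ B : Set (OmegaBar T E), MeasurableSet[FXbar T E T] B →
        (P[Set.indicator (A ∩ B) (fun _ => (1 : ℝ)) | FXbar T E t]
          =ᵐ[P] fun ω =>
            (P[Set.indicator A (fun _ => (1 : ℝ)) | FXbar T E t]) ω *
            (P[Set.indicator B (fun _ => (1 : ℝ)) | FXbar T E t]) ω) := by
  obtain ⟨hprob, -, hM⟩ := hP
  haveI : IsProbabilityMeasure P := hprob
  intro t htT A hA B hB
  have hm : FXbar T E t ≤ (inferInstance : MeasurableSpace (OmegaBar T E)) := FXbar_le t
  have hle : FXbar T E t ≤ Fbar T E t := le_sup_left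
  obtain ⟨g, hgm, hgle, hgid⟩ := good_all P π hM t htT B hB
  set gR : OmegaBar T E → ℝ := fun ω => (g ω).toReal with hgRdef
  have hgRm : Measurable[FXbar T E t] gR := hgm.ennreal_toReal
  have hgRamb : Measurable gR := hgRm.mono hm le_rfl
  have hgR0 : ∀ ω, 0 ≤ gR ω := fun ω => ENNReal.toReal_nonneg
  have hgR1 : ∀ ω, gR ω ≤ 1 := fun ω => by
    have := ENNReal.toReal_mono ENNReal.one_ne_top (hgle ω)
    simpa using this
  have hBamb : MeasurableSet B := FXbar_le T _ hB
  have hAamb : MeasurableSet A := Fbar_le t _ hA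
  have hInd : ∀ S : Set (OmegaBar T E), MeasurableSet S →
      Integrable (Set.indicator S (fun _ => (1:ℝ))) P := fun S hS =>
    (integrable_const (1:ℝ)).indicator hS
  have key : ∀ A' : Set (OmegaBar T E), MeasurableSet[Fbar T E t] A' →
      ∫ ω in A', Set.indicator B (fun _ => (1:ℝ)) ω ∂P = ∫ ω in A', gR ω ∂P := by
    intro A' hA'
    have hlhs : ∫ ω in A', Set.indicator B (fun _ => (1:ℝ)) ω ∂P
        = (P (A' ∩ B)).toReal := by
      rw [integral_indicator_const (1:ℝ) hBamb, measureReal_restrict_apply hBamb,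
        smul_eq_mul, mul_one, Set.inter_comm, measureReal_def]
    have hrhs : ∫ ω in A', gR ω ∂P = (∫⁻ ω in A', g ω ∂P).toReal :=
      integral_toReal ((hgm.mono hm le_rfl).aemeasurable.restrict)
        (ae_of_all _ fun ω => lt_of_le_of_lt (hgle ω) ENNReal.one_lt_top)
    rw [hlhs, hrhs, ← hgid A' hA']
  have hgRint : Integrable gR P := by
    refine (integrable_const (1:ℝ)).mono' hgRamb.aestronglyMeasurable
      (ae_of_all _ fun ω => ?_)
    rw [Real.norm_eq_abs, abs_of_nonneg (hgR0 ω)]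
    simpa using hgR1 ω
  have hgRcond : gR =ᵐ[P] P[Set.indicator B (fun _ => (1:ℝ)) | FXbar T E t] := by
    refine ae_eq_condExp_of_forall_setIntegral_eq hm (hInd B hBamb)
      (fun s _ _ => hgRint.integrableOn)
      (fun s hs _ => (key s (hle _ hs)).symm)
      (hgRm.stronglyMeasurable.aestronglyMeasurable)
  set cA := P[Set.indicator A (fun _ => (1:ℝ)) | FXbar T E t] with hcA
  set cB := P[Set.indicator B (fun _ => (1:ℝ)) | FXbar T E t] with hcB
  have hintprod : Integrable (fun ω => gR ω * Set.indicator A (fun _ => (1:ℝ)) ω) P := by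
    refine (integrable_const (1:ℝ)).mono'
      (hgRamb.mul (measurable_one.indicator hAamb)).aestronglyMeasurable
      (ae_of_all _ fun ω => ?_)
    rw [Real.norm_eq_abs, abs_mul, abs_of_nonneg (hgR0 ω)]
    have h1 : |Set.indicator A (fun _ => (1:ℝ)) ω| ≤ 1 := by
      by_cases h : ω ∈ A <;> simp [h]
    calc gR ω * |Set.indicator A (fun _ => (1:ℝ)) ω| ≤ 1 * 1 :=
          mul_le_mul (hgR1 ω) h1 (abs_nonneg _) zero_le_one
      _ = 1 := one_mul 1
  have hpull : P[(fun ω => gR ω * Set.indicator A (fun _ => (1:ℝ)) ω) | FXbar T E t]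
      =ᵐ[P] fun ω => gR ω * cA ω :=
    condExp_mul_of_stronglyMeasurable_left hgRm.stronglyMeasurable hintprod (hInd A hAamb)
  refine (ae_eq_condExp_of_forall_setIntegral_eq hm (hInd (A ∩ B) (hAamb.inter hBamb))
    (fun s _ _ => ?_) (fun s hs _ => ?_)
    ((stronglyMeasurable_condExp.mul stronglyMeasurable_condExp).aestronglyMeasurable)).symm
  · -- integrability of the product on s
    have hcA_bdd : ∀ᵐ ω ∂P, |cA ω| ≤ (1:ℝ≥0) := by
      refine ae_bdd_condExp_of_ae_bdd (ae_of_all _ fun ω => ?_)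
      by_cases h : ω ∈ A <;> simp [h]
    have hcB_bdd : ∀ᵐ ω ∂P, |cB ω| ≤ (1:ℝ≥0) := by
      refine ae_bdd_condExp_of_ae_bdd (ae_of_all _ fun ω => ?_)
      by_cases h : ω ∈ B <;> simp [h]
    refine ((integrable_const (1:ℝ)).mono'
      ((stronglyMeasurable_condExp.mono hm).mul
        (stronglyMeasurable_condExp.mono hm)).aestronglyMeasurable ?_).integrableOn
    filter_upwards [hcA_bdd, hcB_bdd] with ω h1 h2
    rw [Pi.mul_apply, Real.norm_eq_abs, abs_mul]
    calc |cA ω| * |cB ω| ≤ 1 * 1 := by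
          refine mul_le_mul ?_ ?_ (abs_nonneg _) zero_le_one
          · simpa using h1
          · simpa using h2
      _ = 1 := one_mul 1
  · -- the set-integral identity
    have hsF : MeasurableSet[Fbar T E t] s := hle _ hs
    have hsamb : MeasurableSet s := Fbar_le t _ hsF
    have e2 : ∫ ω in A ∩ s, Set.indicator B (fun _ => (1:ℝ)) ω ∂P
        = ∫ ω in A ∩ s, gR ω ∂P := key _ (hA.inter hsF)
    have e3 : ∫ ω in A ∩ s, gR ω ∂P
        = ∫ ω in s, gR ω * Set.indicator A (fun _ => (1:ℝ)) ω ∂P := by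
      have hptw : (fun ω => gR ω * Set.indicator A (fun _ => (1:ℝ)) ω)
          = fun ω => Set.indicator A gR ω := by
        funext ω
        by_cases h : ω ∈ A <;> simp [h]
      rw [hptw, setIntegral_indicator hAamb, Set.inter_comm]
    have e4 : ∫ ω in s, gR ω * Set.indicator A (fun _ => (1:ℝ)) ω ∂P
        = ∫ ω in s, gR ω * cA ω ∂P := by
      rw [← setIntegral_condExp hm hintprod hs]
      exact integral_congr_ae (ae_restrict_of_ae hpull)
    have e5 : ∫ ω in s, gR ω * cA ω ∂P = ∫ ω in s, cA ω * cB ω ∂P := by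
      refine integral_congr_ae (ae_restrict_of_ae (hgRcond.mono fun ω h => ?_))
      show gR ω * cA ω = cA ω * cB ω
      rw [h, mul_comm]
    have e1 : ∫ ω in s, Set.indicator (A ∩ B) (fun _ => (1:ℝ)) ω ∂P
        = ∫ ω in A ∩ s, Set.indicator B (fun _ => (1:ℝ)) ω ∂P := by
      rw [integral_indicator_const (1:ℝ) (hAamb.inter hBamb),
        measureReal_restrict_apply (hAamb.inter hBamb),
        integral_indicator_const (1:ℝ) hBamb,
        measureReal_restrict_apply hBamb]
      have : A ∩ B ∩ s = B ∩ (A ∩ s) := by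
        ext ω; simp only [Set.mem_inter_iff]; tauto
      rw [this]
    rw [e1, e2, e3, e4, e5]
    rfl


end Thms
end LPOS
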